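/- The generator of dissipative particle dynamics in dimension three annihilates each component of the total angular momentum: with potential U(q) = Σ_{i<j} φ(|q_i − q_j|) for a differentiable φ : (0,∞) → ℝ and conservative forces F_i = −∇_{q_i}U, for every fixed c ∈ ℝ³ the observable g(q,p) = c·Σ_k (q_k × p_k) satisfies, at every phase point (q,p) with pairwise distinct positions, Σ_i (p_i/m_i)·∇_{q_i} g + Σ_i F_i·∇_{p_i} g + Σ_{i<j} [ −γ ω_D(r_ij)(e_ij·v_ij) (D_{ij} g) + (σ²/2) ω_R(r_ij)² (D_{ij}² g) ] = 0. -/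

import Mathlib

open scoped RealInnerProductSpace BigOperators

noncomputable section

/-- Cross product on `EuclideanSpace ℝ (Fin 3)`. -/
def cross3 (x y : EuclideanSpace ℝ (Fin 3)) : EuclideanSpace ℝ (Fin 3) :=
  (WithLp.equiv 2 (Fin 3 → ℝ)).symm
    (crossProduct ((WithLp.equiv 2 (Fin 3 → ℝ)) x) ((WithLp.equiv 2 (Fin 3 → ℝ)) y))

/-- Unit separation vector `e_ij = (q_i − q_j)/|q_i − q_j|`. -/
def unitSep {N : ℕ} (q : Fin N → EuclideanSpace ℝ (Fin 3)) (i j : Fin N) :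
    EuclideanSpace ℝ (Fin 3) :=
  ‖q i - q j‖⁻¹ • (q i - q j)

/-- Pair direction in momentum space: `e_ij` in the `i`-th slot, `−e_ij` in the `j`-th slot,
`0` elsewhere. -/
def pairDir {N : ℕ} (q : Fin N → EuclideanSpace ℝ (Fin 3)) (i j : Fin N) :
    Fin N → EuclideanSpace ℝ (Fin 3) :=
  Pi.single i (unitSep q i j) - Pi.single j (unitSep q i j)

/-- Relative velocity `v_ij = p_i/m_i − p_j/m_j`. -/
def relVel {N : ℕ} (m : Fin N → ℝ) (p : Fin N → EuclideanSpace ℝ (Fin 3)) (i j : Fin N) :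
    EuclideanSpace ℝ (Fin 3) :=
  (m i)⁻¹ • p i - (m j)⁻¹ • p j

namespace DPDAux

abbrev E3 := EuclideanSpace ℝ (Fin 3)

lemma cross3_apply (x y : E3) (k : Fin 3) :
    cross3 x y k = ![x 1 * y 2 - x 2 * y 1, x 2 * y 0 - x 0 * y 2, x 0 * y 1 - x 1 * y 0] k := by
  simp [cross3, cross_apply, PiLp.toLp_apply]

lemma inner_cross3_add_right (c x y z : E3) (t : ℝ) :
    ⟪c, cross3 x (y + t • z)⟫ = ⟪c, cross3 x y⟫ + t * ⟪c, cross3 x z⟫ := by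
  simp [PiLp.inner_apply, RCLike.inner_apply, Fin.sum_univ_three, cross3_apply]; ring

lemma inner_cross3_add_left (c x y z : E3) (t : ℝ) :
    ⟪c, cross3 (x + t • z) y⟫ = ⟪c, cross3 x y⟫ + t * ⟪c, cross3 z y⟫ := by
  simp [PiLp.inner_apply, RCLike.inner_apply, Fin.sum_univ_three, cross3_apply]; ring

lemma inner_cross3_smul_self (c x : E3) (t : ℝ) : ⟪c, cross3 (t • x) x⟫ = 0 := by
  simp [PiLp.inner_apply, RCLike.inner_apply, Fin.sum_univ_three, cross3_apply]; ring

lemma inner_cross3_neg_right (c x w : E3) : ⟪c, cross3 x (-w)⟫ = -⟪c, cross3 x w⟫ := by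
  simp [PiLp.inner_apply, RCLike.inner_apply, Fin.sum_univ_three, cross3_apply]; ring

lemma inner_cross3_cyclic (c x w : E3) : ⟪c, cross3 x w⟫ = ⟪w, cross3 c x⟫ := by
  simp [PiLp.inner_apply, RCLike.inner_apply, Fin.sum_univ_three, cross3_apply]; ring

lemma torque_pair_zero (c x y : E3) : ⟪x - y, cross3 c x⟫ + ⟪y - x, cross3 c y⟫ = 0 := by
  simp [PiLp.inner_apply, RCLike.inner_apply, Fin.sum_univ_three, cross3_apply]; ring

lemma inner_cross3_sep (c x y : E3) (t : ℝ) :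
    ⟪c, cross3 x (t • (x - y))⟫ = ⟪c, cross3 y (t • (x - y))⟫ := by
  simp [PiLp.inner_apply, RCLike.inner_apply, Fin.sum_univ_three, cross3_apply]; ring

lemma inner_cross3_zero_left (c y : E3) : ⟪c, cross3 0 y⟫ = 0 := by
  simp [PiLp.inner_apply, RCLike.inner_apply, Fin.sum_univ_three, cross3_apply]

lemma inner_cross3_zero_right (c y : E3) : ⟪c, cross3 y 0⟫ = 0 := by
  simp [PiLp.inner_apply, RCLike.inner_apply, Fin.sum_univ_three, cross3_apply]

lemma inner_cross3_sub_right (c x a b : E3) :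
    ⟪c, cross3 x (a - b)⟫ = ⟪c, cross3 x a⟫ - ⟪c, cross3 x b⟫ := by
  simp [PiLp.inner_apply, RCLike.inner_apply, Fin.sum_univ_three, cross3_apply]; ring

lemma lineDeriv_affine {E' : Type*} [NormedAddCommGroup E'] [NormedSpace ℝ E']
    {f : E' → ℝ} {x v : E'} {A B : ℝ} (h : ∀ t : ℝ, f (x + t • v) = A + t * B) :
    lineDeriv ℝ f x v = B := by
  have hfun : (fun t : ℝ => f (x + t • v)) = fun t => A + t * B := funext h
  rw [lineDeriv, hfun]
  simpa using (((hasDerivAt_id (0:ℝ)).mul_const B).const_add A).deriv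

/-- Line derivative in the momentum variable. -/
lemma lineDeriv_momentum {N : ℕ} (c : E3) (q p v : Fin N → E3) :
    lineDeriv ℝ (fun p' => ⟪c, ∑ k, cross3 (q k) (p' k)⟫) p v
      = ∑ k, ⟪c, cross3 (q k) (v k)⟫ := by
  apply lineDeriv_affine (A := ∑ k, ⟪c, cross3 (q k) (p k)⟫)
  intro t
  have : ∀ k : Fin N, (p + t • v) k = p k + t • v k := fun k => rfl
  simp only [this, inner_sum, inner_cross3_add_right, Finset.sum_add_distrib,
    Finset.mul_sum]

/-- Line derivative in the position variable. -/
lemma lineDeriv_position {N : ℕ} (c : E3) (q p v : Fin N → E3) :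
    lineDeriv ℝ (fun q' => ⟪c, ∑ k, cross3 (q' k) (p k)⟫) q v
      = ∑ k, ⟪c, cross3 (v k) (p k)⟫ := by
  apply lineDeriv_affine (A := ∑ k, ⟪c, cross3 (q k) (p k)⟫)
  intro t
  have : ∀ k : Fin N, (q + t • v) k = q k + t • v k := fun k => rfl
  simp only [this, inner_sum, inner_cross3_add_left, Finset.sum_add_distrib,
    Finset.mul_sum]

lemma hasFDerivAt_norm_ne (x : E3) (hx : x ≠ 0) :
    HasFDerivAt (fun y : E3 => ‖y‖) (‖x‖⁻¹ • innerSL ℝ x) x := by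
  have h1 : HasFDerivAt (fun y : E3 => ‖y‖ ^ 2) (2 • (innerSL ℝ x)) x :=
    (hasStrictFDerivAt_norm_sq x).hasFDerivAt
  have hx2 : ‖x‖ ^ 2 ≠ 0 := pow_ne_zero _ (norm_ne_zero_iff.2 hx)
  have h2 := h1.sqrt hx2
  have hs : (fun y : E3 => Real.sqrt (‖y‖ ^ 2)) = fun y : E3 => ‖y‖ := by
    funext y; rw [Real.sqrt_sq (norm_nonneg y)]
  rw [hs] at h2
  convert h2 using 1
  ext y
  have hxn : ‖x‖ ≠ 0 := norm_ne_zero_iff.2 hx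
  simp [Real.sqrt_sq (norm_nonneg x)]
  ext y
  simp [Real.sqrt_sq (norm_nonneg x)]
  field_simp

lemma hasFDerivAt_phi_norm (φ : ℝ → ℝ) (hφ : DifferentiableOn ℝ φ (Set.Ioi 0))
    (a x₀ : E3) (h : x₀ ≠ a) :
    HasFDerivAt (fun x : E3 => φ ‖x - a‖)
      ((deriv φ ‖x₀ - a‖ * ‖x₀ - a‖⁻¹) • innerSL ℝ (x₀ - a)) x₀ := by
  have hsub : HasFDerivAt (fun x : E3 => x - a) (ContinuousLinearMap.id ℝ E3) x₀ :=
    (hasFDerivAt_id x₀).sub_const a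
  have hne : (x₀ - a) ≠ 0 := sub_ne_zero.2 h
  have hn : HasFDerivAt (fun x : E3 => ‖x - a‖) (‖x₀ - a‖⁻¹ • innerSL ℝ (x₀ - a)) x₀ := by
    have := (hasFDerivAt_norm_ne (x₀ - a) hne).comp x₀ hsub
    simp only [map_sub] at this ⊢
    exact this
  have hr : (0:ℝ) < ‖x₀ - a‖ := norm_pos_iff.2 hne
  have hdφ : HasDerivAt φ (deriv φ ‖x₀ - a‖) ‖x₀ - a‖ :=
    ((hφ.differentiableAt (Ioi_mem_nhds hr)).hasDerivAt)
  have := hdφ.comp_hasFDerivAt x₀ hn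
  rw [smul_smul] at this
  exact this

lemma hasFDerivAt_U_update {N : ℕ} (φ : ℝ → ℝ) (hφ : DifferentiableOn ℝ φ (Set.Ioi 0))
    (q : Fin N → E3) (hq : ∀ i j : Fin N, i ≠ j → q i ≠ q j) (i : Fin N) :
    HasFDerivAt
      (fun x : E3 => ∑ a : Fin N, ∑ b : Fin N,
        if a < b then φ ‖Function.update q i x a - Function.update q i x b‖ else 0)
      (∑ a : Fin N, ∑ b : Fin N,
        if a < b then
          (if a = i then (deriv φ ‖q i - q b‖ * ‖q i - q b‖⁻¹) • innerSL ℝ (q i - q b)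
           else if b = i then (deriv φ ‖q i - q a‖ * ‖q i - q a‖⁻¹) • innerSL ℝ (q i - q a)
           else 0)
        else 0) (q i) := by
  apply HasFDerivAt.fun_sum; intro a _
  apply HasFDerivAt.fun_sum; intro b _
  by_cases hab : a < b
  · have hne : a ≠ b := ne_of_lt hab
    simp only [if_pos hab]
    by_cases ha : a = i
    · subst ha
      have hbi : b ≠ a := hne.symm
      simp only [if_pos rfl, Function.update_self, Function.update_of_ne hbi]
      exact hasFDerivAt_phi_norm φ hφ (q b) (q a) (hq a b hne)
    · by_cases hb : b = i
      · subst hb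
        have hfun : (fun x : E3 => φ ‖Function.update q b x a - Function.update q b x b‖)
            = fun x : E3 => φ ‖x - q a‖ := by
          funext x
          rw [Function.update_self, Function.update_of_ne ha, norm_sub_rev]
        simp only [if_neg ha, if_pos rfl, hfun]
        exact hasFDerivAt_phi_norm φ hφ (q a) (q b) (hq b a (Ne.symm ha))
      · simp only [if_neg ha, if_neg hb, Function.update_of_ne ha, Function.update_of_ne hb]
        exact hasFDerivAt_const _ _
  · simp only [if_neg hab]
    exact hasFDerivAt_const _ _

end DPDAux

open DPDAux

/-- the generator of dissipative particle dynamics in dimension three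
annihilates each component `c·Σ_k (q_k × p_k)` of the total angular momentum. -/
theorem dpd_generator_annihilates_angular_momentum
    {N : ℕ} (hN : 2 ≤ N)
    (m : Fin N → ℝ) (hm : ∀ k, 0 < m k)
    (γ σ : ℝ) (hγ : 0 < γ)
    (ωD ωR : ℝ → ℝ)
    (φ : ℝ → ℝ) (hφ : DifferentiableOn ℝ φ (Set.Ioi 0))
    -- the potential `U(q) = Σ_{i<j} φ(|q_i − q_j|)`
    (U : (Fin N → EuclideanSpace ℝ (Fin 3)) → ℝ)
    (hU : U = fun q => ∑ i, ∑ j, if i < j then φ ‖q i - q j‖ else 0)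
    -- the conservative forces `F_i = −∇_{q_i} U`
    (F : (Fin N → EuclideanSpace ℝ (Fin 3)) → Fin N → EuclideanSpace ℝ (Fin 3))
    (hF : F = fun q i => -gradient (fun x => U (Function.update q i x)) (q i))
    (c : EuclideanSpace ℝ (Fin 3))
    -- the observable `g(q,p) = c·Σ_k (q_k × p_k)`
    (g : (Fin N → EuclideanSpace ℝ (Fin 3)) → (Fin N → EuclideanSpace ℝ (Fin 3)) → ℝ)
    (hg : g = fun q p => ⟪c, ∑ k, cross3 (q k) (p k)⟫)
    -- a phase point with pairwise distinct positions
    (q p : Fin N → EuclideanSpace ℝ (Fin 3))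
    (hq : ∀ i j : Fin N, i ≠ j → q i ≠ q j) :
    -- `Σ_i (p_i/m_i)·∇_{q_i} g`
    (∑ i, lineDeriv ℝ (fun q' => g q' p) q (Pi.single i ((m i)⁻¹ • p i)))
      -- `+ Σ_i F_i·∇_{p_i} g`
      + (∑ i, lineDeriv ℝ (fun p' => g q p') p (Pi.single i (F q i)))
      -- `+ Σ_{i<j} [ −γ ω_D(r_ij)(e_ij·v_ij) D_{ij} g + (σ²/2) ω_R(r_ij)² D_{ij}² g ]`
      + (∑ i, ∑ j, if i < j then
          -(γ * ωD ‖q i - q j‖) * ⟪unitSep q i j, relVel m p i j⟫ *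
              lineDeriv ℝ (fun p' => g q p') p (pairDir q i j)
            + σ ^ 2 / 2 * ωR ‖q i - q j‖ ^ 2 *
              lineDeriv ℝ (fun p' => lineDeriv ℝ (fun p'' => g q p'') p' (pairDir q i j))
                p (pairDir q i j)
          else 0)
      = 0 := by
  
  subst hU hF hg
  -- Abbreviations
  set s : Fin N → Fin N → ℝ := fun a b => deriv φ ‖q a - q b‖ * ‖q a - q b‖⁻¹ with hs
  -- ## Term 1 vanishes
  have hterm1 : ∀ i : Fin N,
      lineDeriv ℝ (fun q' => ⟪c, ∑ k, cross3 (q' k) (p k)⟫) q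
        (Pi.single i ((m i)⁻¹ • p i)) = 0 := by
    intro i
    rw [lineDeriv_position]
    rw [Finset.sum_eq_single i]
    · rw [Pi.single_eq_same]; exact inner_cross3_smul_self c (p i) _
    · intro k _ hk
      rw [Pi.single_eq_of_ne hk]; exact inner_cross3_zero_left c (p k)
    · intro h; exact absurd (Finset.mem_univ i) h
  -- ## The pair-direction derivative of g vanishes
  have hpair : ∀ i j : Fin N, i ≠ j →
      (∑ k, ⟪c, cross3 (q k) (pairDir q i j k)⟫) = 0 := by
    intro i j hij
    have hsplit : ∀ k : Fin N, pairDir q i j k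
        = (Pi.single i (unitSep q i j) : Fin N → E3) k
          - (Pi.single j (unitSep q i j) : Fin N → E3) k :=
      fun k => rfl
    simp only [hsplit, inner_cross3_sub_right, Finset.sum_sub_distrib]
    have h1 : (∑ k, ⟪c, cross3 (q k) ((Pi.single i (unitSep q i j) : Fin N → E3) k)⟫)
        = ⟪c, cross3 (q i) (unitSep q i j)⟫ := by
      rw [Finset.sum_eq_single i]
      · rw [Pi.single_eq_same]
      · intro k _ hk; rw [Pi.single_eq_of_ne hk]; exact inner_cross3_zero_right c (q k)
      · intro h; exact absurd (Finset.mem_univ i) h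
    have h2 : (∑ k, ⟪c, cross3 (q k) ((Pi.single j (unitSep q i j) : Fin N → E3) k)⟫)
        = ⟪c, cross3 (q j) (unitSep q i j)⟫ := by
      rw [Finset.sum_eq_single j]
      · rw [Pi.single_eq_same]
      · intro k _ hk; rw [Pi.single_eq_of_ne hk]; exact inner_cross3_zero_right c (q k)
      · intro h; exact absurd (Finset.mem_univ j) h
    rw [h1, h2, unitSep, inner_cross3_sep, sub_self]
  -- ## Term 3 vanishes
  have hterm3 : ∀ i j : Fin N, i < j →
      -(γ * ωD ‖q i - q j‖) * ⟪unitSep q i j, relVel m p i j⟫ *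
          lineDeriv ℝ (fun p' => ⟪c, ∑ k, cross3 (q k) (p' k)⟫) p (pairDir q i j)
        + σ ^ 2 / 2 * ωR ‖q i - q j‖ ^ 2 *
          lineDeriv ℝ (fun p' =>
            lineDeriv ℝ (fun p'' => ⟪c, ∑ k, cross3 (q k) (p'' k)⟫) p' (pairDir q i j))
            p (pairDir q i j) = 0 := by
    intro i j hij
    have hz := hpair i j (ne_of_lt hij)
    have hD1 : lineDeriv ℝ (fun p' => ⟪c, ∑ k, cross3 (q k) (p' k)⟫) p (pairDir q i j) = 0 := by
      rw [lineDeriv_momentum]; exact hz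
    have hconst : (fun p' : Fin N → E3 =>
        lineDeriv ℝ (fun p'' => ⟪c, ∑ k, cross3 (q k) (p'' k)⟫) p' (pairDir q i j))
        = fun _ => (0:ℝ) := by
      funext p'
      rw [lineDeriv_momentum]; exact hz
    have hD2 : lineDeriv ℝ (fun p' =>
        lineDeriv ℝ (fun p'' => ⟪c, ∑ k, cross3 (q k) (p'' k)⟫) p' (pairDir q i j))
        p (pairDir q i j) = 0 := by
      rw [hconst]
      exact lineDeriv_affine (A := 0) (B := 0) (fun t => by simp)
    rw [hD1, hD2]; ring
  -- ## Term 2: forces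
  set L : Fin N → (E3 →L[ℝ] ℝ) := fun i =>
    ∑ a : Fin N, ∑ b : Fin N,
      if a < b then
        (if a = i then s i b • innerSL ℝ (q i - q b)
         else if b = i then s i a • innerSL ℝ (q i - q a)
         else 0)
      else 0 with hL
  have hgrad : ∀ i : Fin N,
      gradient (fun x => ∑ a : Fin N, ∑ b : Fin N,
        if a < b then φ ‖Function.update q i x a - Function.update q i x b‖ else 0) (q i)
      = (InnerProductSpace.toDual ℝ E3).symm (L i) := by
    intro i
    have hfd := hasFDerivAt_U_update φ hφ q hq i
    have : HasGradientAt
        (fun x : E3 => ∑ a : Fin N, ∑ b : Fin N,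
          if a < b then φ ‖Function.update q i x a - Function.update q i x b‖ else 0)
        ((InnerProductSpace.toDual ℝ E3).symm (L i)) (q i) := by
      rw [hasGradientAt_iff_hasFDerivAt, LinearIsometryEquiv.apply_symm_apply]
      exact hfd
    exact this.gradient
  have hterm2 : (∑ i, lineDeriv ℝ (fun p' => ⟪c, ∑ k, cross3 (q k) (p' k)⟫) p
      (Pi.single i (-gradient (fun x => ∑ a : Fin N, ∑ b : Fin N,
        if a < b then φ ‖Function.update q i x a - Function.update q i x b‖ else 0) (q i))))
      = -(∑ i, L i (cross3 c (q i))) := by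
    rw [← Finset.sum_neg_distrib]
    apply Finset.sum_congr rfl
    intro i _
    rw [lineDeriv_momentum]
    rw [Finset.sum_eq_single i]
    · rw [Pi.single_eq_same, hgrad i, inner_cross3_neg_right, inner_cross3_cyclic,
        InnerProductSpace.toDual_symm_apply]
    · intro k _ hk; rw [Pi.single_eq_of_ne hk]; exact inner_cross3_zero_right c (q k)
    · intro h; exact absurd (Finset.mem_univ i) h
  -- the total torque vanishes
  have htorque : (∑ i, L i (cross3 c (q i))) = 0 := by
    have happ : ∀ i : Fin N, L i (cross3 c (q i))
        = ∑ a : Fin N, ∑ b : Fin N,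
          if a < b then
            (if a = i then s i b * ⟪q i - q b, cross3 c (q i)⟫
             else if b = i then s i a * ⟪q i - q a, cross3 c (q i)⟫
             else 0)
          else 0 := by
      intro i
      rw [hL]
      simp only [ContinuousLinearMap.sum_apply]
      apply Finset.sum_congr rfl; intro a _
      apply Finset.sum_congr rfl; intro b _
      by_cases hab : a < b
      · simp only [if_pos hab]
        by_cases ha : a = i
        · simp only [if_pos ha, ContinuousLinearMap.smul_apply, innerSL_apply_apply,
            smul_eq_mul]
        · by_cases hb : b = i
          · simp only [if_neg ha, if_pos hb, ContinuousLinearMap.smul_apply, smul_eq_mul]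
            rfl
          · simp only [if_neg ha, if_neg hb, ContinuousLinearMap.zero_apply]
      · simp only [if_neg hab, ContinuousLinearMap.zero_apply]
    simp only [happ]
    rw [Finset.sum_comm]
    have : ∀ a : Fin N, (∑ i : Fin N, ∑ b : Fin N, if a < b then
            (if a = i then s i b * ⟪q i - q b, cross3 c (q i)⟫
             else if b = i then s i a * ⟪q i - q a, cross3 c (q i)⟫
             else 0)
          else 0)
        = ∑ b : Fin N, ∑ i : Fin N, if a < b then
            (if a = i then s i b * ⟪q i - q b, cross3 c (q i)⟫
             else if b = i then s i a * ⟪q i - q a, cross3 c (q i)⟫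
             else 0)
          else 0 := fun a => Finset.sum_comm
    simp only [this]
    apply Finset.sum_eq_zero; intro a _
    apply Finset.sum_eq_zero; intro b _
    by_cases hab : a < b
    · simp only [if_pos hab]
      have hne : a ≠ b := ne_of_lt hab
      have hsum : ∀ i : Fin N,
          (if a = i then s i b * ⟪q i - q b, cross3 c (q i)⟫
           else if b = i then s i a * ⟪q i - q a, cross3 c (q i)⟫
           else 0)
          = (if i = a then s a b * ⟪q a - q b, cross3 c (q a)⟫ else 0)
            + (if i = b then s b a * ⟪q b - q a, cross3 c (q b)⟫ else 0) := by
        intro i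
        by_cases hai : a = i
        · have hib : ¬ i = b := fun h => hne (hai.trans h)
          simp [hai, hib]
        · by_cases hbi : b = i
          · have hia : ¬ i = a := fun h => hai h.symm
            simp [hbi, hai, hia]
          · have hia : ¬ i = a := fun h => hai h.symm
            have hib : ¬ i = b := fun h => hbi h.symm
            simp [hai, hbi, hia, hib]
      simp only [hsum, Finset.sum_add_distrib, Finset.sum_ite_eq', Finset.mem_univ,
        if_pos]
      have hsymm : s b a = s a b := by
        rw [hs]; simp only [norm_sub_rev (q b) (q a)]
      rw [hsymm, ← mul_add, torque_pair_zero, mul_zero]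
    · simp only [if_neg hab, Finset.sum_const_zero]
  -- ## Conclusion
  rw [Finset.sum_congr rfl (fun i _ => hterm1 i), hterm2, htorque,
    Finset.sum_congr rfl (fun i _ => Finset.sum_congr rfl (fun j _ => by
      by_cases hij : i < j
      · rw [if_pos hij, hterm3 i j hij]
      · rw [if_neg hij]))]
  simp
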